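/- Fix k ∈ ℤ₊ and let V be any linear subspace of the dual of Π(ℝ^d) such that every nonzero λ ∈ V vanishes on Π_{<k} but does not vanish on Π_{≤k}. Then the bilinear form ⟨λ,μ⟩_k := (−1)^k (λ⊗μ)‖x−y‖^(2k) is an inner product on V (i.e., it is symmetric and positive definite on V). -/

import Mathlib

open MvPolynomial Finset

noncomputable section

/-- The multi-index on the first (`x`) block of variables of a monomial in `Fin d ⊕ Fin d`. -/
def xpart {d : ℕ} (m : (Fin d ⊕ Fin d) →₀ ℕ) : Fin d →₀ ℕ :=
  Finsupp.equivFunOnFinite.symm fun i => m (Sum.inl i)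

/-- The multi-index on the second (`y`) block of variables. -/
def ypart {d : ℕ} (m : (Fin d ⊕ Fin d) →₀ ℕ) : Fin d →₀ ℕ :=
  Finsupp.equivFunOnFinite.symm fun i => m (Sum.inr i)

/-- `(l ⊗ m) f`: apply `l` in the `x`-variables and `m` in the `y`-variables of a
two-block polynomial `f`, via its canonical representation as a sum of products
of monomials in `x` and monomials in `y`. -/
def tensorApply {d : ℕ} (l m : Module.Dual ℝ (MvPolynomial (Fin d) ℝ))
    (f : MvPolynomial (Fin d ⊕ Fin d) ℝ) : ℝ :=
  ∑ mo ∈ f.support, f.coeff mo * l (monomial (xpart mo) 1) * m (monomial (ypart mo) 1)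

/-- Apply the linear functional `l` in the second (`y`) block of variables,
yielding a polynomial in the first (`x`) block of variables. -/
def applySecond {d : ℕ} (l : Module.Dual ℝ (MvPolynomial (Fin d) ℝ))
    (f : MvPolynomial (Fin d ⊕ Fin d) ℝ) : MvPolynomial (Fin d) ℝ :=
  ∑ mo ∈ f.support, monomial (xpart mo) (f.coeff mo * l (monomial (ypart mo) 1))

/-- The polynomial `(x,y) ↦ ‖x-y‖^(2k)` in the `2d` variables `x(1),…,x(d),y(1),…,y(d)`. -/
def distPoly (d k : ℕ) : MvPolynomial (Fin d ⊕ Fin d) ℝ :=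
  (∑ i : Fin d, (X (Sum.inl i) - X (Sum.inr i)) ^ 2) ^ k

/-- `l` vanishes on all polynomials of total degree `< k` (i.e. `l ⊥ Π_{<k}`). -/
def VanishesLT {d : ℕ} (l : Module.Dual ℝ (MvPolynomial (Fin d) ℝ)) (k : ℕ) : Prop :=
  ∀ p : MvPolynomial (Fin d) ℝ, p.totalDegree < k → l p = 0

/-- `l` vanishes on all polynomials of total degree `≤ k` (i.e. `l ⊥ Π_{≤k}`). -/
def VanishesLE {d : ℕ} (l : Module.Dual ℝ (MvPolynomial (Fin d) ℝ)) (k : ℕ) : Prop :=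
  ∀ p : MvPolynomial (Fin d) ℝ, p.totalDegree ≤ k → l p = 0

/-- `p_{a,β} : x ↦ ‖x‖^(2a) x^β` as a polynomial. -/
def pPoly (d : ℕ) (a : ℕ) (β : Fin d →₀ ℕ) : MvPolynomial (Fin d) ℝ :=
  (∑ i : Fin d, X i ^ 2) ^ a * monomial β 1

variable {d : ℕ} (l m : Module.Dual ℝ (MvPolynomial (Fin d) ℝ))

lemma tensorApply_eq_sum (f : MvPolynomial (Fin d ⊕ Fin d) ℝ) :
    tensorApply l m f = Finsupp.sum (AddMonoidAlgebra.coeff f) (fun mo c =>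
      c * l (monomial (xpart mo) 1) * m (monomial (ypart mo) 1)) := rfl

lemma tensorApply_add (f g : MvPolynomial (Fin d ⊕ Fin d) ℝ) :
    tensorApply l m (f + g) = tensorApply l m f + tensorApply l m g := by
  simp only [tensorApply_eq_sum, AddMonoidAlgebra.coeff_add]
  apply Finsupp.sum_add_index' <;> intros <;> ring

lemma tensorApply_smul (r : ℝ) (f : MvPolynomial (Fin d ⊕ Fin d) ℝ) :
    tensorApply l m (r • f) = r * tensorApply l m f := by
  simp only [tensorApply_eq_sum, AddMonoidAlgebra.coeff_smul]
  rw [Finsupp.sum_smul_index' (by intro i; simp), Finsupp.mul_sum]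
  congr 1; ext mo c; simp [smul_eq_mul]; ring

lemma tensorApply_monomial (mo : (Fin d ⊕ Fin d) →₀ ℕ) (c : ℝ) :
    tensorApply l m (monomial mo c) =
      c * l (monomial (xpart mo) 1) * m (monomial (ypart mo) 1) := by
  simp only [tensorApply_eq_sum]
  rw [← single_eq_monomial, AddMonoidAlgebra.coeff_single, Finsupp.sum_single_index (by simp)]

lemma tensorApply_zero : tensorApply l m 0 = 0 := by
  simp [tensorApply_eq_sum]

lemma tensorApply_sum {ι : Type*} (s : Finset ι) (F : ι → MvPolynomial (Fin d ⊕ Fin d) ℝ) :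
    tensorApply l m (∑ i ∈ s, F i) = ∑ i ∈ s, tensorApply l m (F i) := by
  classical
  induction s using Finset.induction with
  | empty => simp [tensorApply_zero]
  | insert _ _ h ih => rw [Finset.sum_insert h, tensorApply_add, ih, Finset.sum_insert h]

lemma xpart_combine (α β : Fin d →₀ ℕ) :
    xpart (α.mapDomain Sum.inl + β.mapDomain Sum.inr) = α := by
  ext i
  simp only [xpart, Finsupp.equivFunOnFinite_symm_apply_apply, Finsupp.add_apply]
  rw [Finsupp.mapDomain_apply Sum.inl_injective,
    Finsupp.mapDomain_notin_range _ _ (by simp)]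
  simp

lemma ypart_combine (α β : Fin d →₀ ℕ) :
    ypart (α.mapDomain Sum.inl + β.mapDomain Sum.inr) = β := by
  ext i
  simp only [ypart, Finsupp.equivFunOnFinite_symm_apply_apply, Finsupp.add_apply]
  rw [Finsupp.mapDomain_apply Sum.inr_injective,
    Finsupp.mapDomain_notin_range _ _ (by simp)]
  simp

lemma tensorApply_rename_mul (f g : MvPolynomial (Fin d) ℝ) :
    tensorApply l m (rename Sum.inl f * rename Sum.inr g) = l f * m g := by
  have key : ∀ (α β : Fin d →₀ ℕ) (a b : ℝ),
      tensorApply l m (rename Sum.inl (monomial α a) * rename Sum.inr (monomial β b)) =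
        l (monomial α a) * m (monomial β b) := by
    intro α β a b
    rw [rename_monomial, rename_monomial, monomial_mul, tensorApply_monomial,
      xpart_combine, ypart_combine]
    have ha : (monomial α a : MvPolynomial (Fin d) ℝ) = a • monomial α 1 := by
      simp [smul_monomial]
    have hb : (monomial β b : MvPolynomial (Fin d) ℝ) = b • monomial β 1 := by
      simp [smul_monomial]
    rw [ha, hb, map_smul, map_smul, smul_eq_mul, smul_eq_mul]; ring
  conv_lhs => rw [f.as_sum, g.as_sum]
  rw [map_sum, map_sum, Finset.sum_mul_sum, tensorApply_sum]
  conv_rhs => rw [f.as_sum, g.as_sum, map_sum, map_sum, Finset.sum_mul_sum]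
  refine Finset.sum_congr rfl fun α hα => ?_
  rw [tensorApply_sum]
  exact Finset.sum_congr rfl fun β hβ => key α β _ _

def Qp (d : ℕ) : MvPolynomial (Fin d) ℝ := ∑ i, X i ^ 2
def uProd {d b : ℕ} (g : Fin b → Fin d) : MvPolynomial (Fin d) ℝ := ∏ t, X (g t)

lemma hP_pow (d b : ℕ) :
    (∑ i : Fin d, X (Sum.inl i) * X (Sum.inr i) : MvPolynomial (Fin d ⊕ Fin d) ℝ) ^ b
      = ∑ g : Fin b → Fin d, rename Sum.inl (uProd g) * rename Sum.inr (uProd g) := by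
  rw [Finset.sum_pow', Fintype.piFinset_univ]
  refine Finset.sum_congr rfl fun g _ => ?_
  rw [uProd, map_prod, map_prod, ← Finset.prod_mul_distrib]
  simp [rename_X]

lemma hAB_pow (d c : ℕ) :
    ((rename Sum.inl (Qp d) + rename Sum.inr (Qp d) : MvPolynomial (Fin d ⊕ Fin d) ℝ)) ^ c
      = ∑ j ∈ Finset.range (c+1), ((c.choose j : ℝ)) •
          (rename Sum.inl (Qp d ^ j) * rename Sum.inr (Qp d ^ (c - j))) := by
  rw [add_pow]
  refine Finset.sum_congr rfl fun j hj => ?_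
  rw [map_pow, map_pow, smul_eq_C_mul, map_natCast (C : ℝ →+* MvPolynomial (Fin d ⊕ Fin d) ℝ)]
  ring

lemma hS (d : ℕ) :
    (∑ i : Fin d, (X (Sum.inl i) - X (Sum.inr i)) ^ 2 : MvPolynomial (Fin d ⊕ Fin d) ℝ)
      = (-2 : ℝ) • (∑ i : Fin d, X (Sum.inl i) * X (Sum.inr i))
        + (rename Sum.inl (Qp d) + rename Sum.inr (Qp d)) := by
  rw [Qp, map_sum, map_sum, smul_sum, ← Finset.sum_add_distrib, ← Finset.sum_add_distrib]
  refine Finset.sum_congr rfl fun i _ => ?_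
  rw [map_pow, map_pow, rename_X, rename_X, smul_eq_C_mul]
  have : (C (-2 : ℝ) : MvPolynomial (Fin d ⊕ Fin d) ℝ) = -2 := by
    simp [map_neg, map_ofNat]
  rw [this]; ring

lemma distPoly_expand (d k : ℕ) :
    distPoly d k = ∑ b ∈ Finset.range (k+1), ∑ j ∈ Finset.range (k-b+1),
      ∑ g : Fin b → Fin d,
      ((-2:ℝ)^b * (k.choose b) * ((k-b).choose j)) •
        (rename Sum.inl (Qp d ^ j * uProd g)
          * rename Sum.inr (Qp d ^ (k-b-j) * uProd g)) := by
  rw [distPoly, hS, add_pow]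
  refine Finset.sum_congr rfl fun b hb => ?_
  have hn : ∀ T : MvPolynomial (Fin d ⊕ Fin d) ℝ,
      T * ((k.choose b : ℕ) : MvPolynomial (Fin d ⊕ Fin d) ℝ) = ((k.choose b : ℝ)) • T := by
    intro T
    rw [mul_comm, ← nsmul_eq_mul, ← Nat.cast_smul_eq_nsmul ℝ]
  rw [smul_pow, hP_pow, hAB_pow, smul_mul_assoc, hn, smul_smul, Finset.sum_mul_sum,
    Finset.smul_sum, Finset.sum_comm]
  refine Finset.sum_congr rfl fun j hj => ?_
  rw [Finset.smul_sum]
  refine Finset.sum_congr rfl fun g _ => ?_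
  rw [mul_smul_comm, smul_smul, map_mul, map_mul]
  congr 1
  · ring
  · ring
lemma tensorApply_distPoly (l m : Module.Dual ℝ (MvPolynomial (Fin d) ℝ)) (k : ℕ) :
    tensorApply l m (distPoly d k) = ∑ b ∈ Finset.range (k+1), ∑ j ∈ Finset.range (k-b+1),
      ∑ g : Fin b → Fin d,
      ((-2:ℝ)^b * (k.choose b) * ((k-b).choose j)) *
        (l (Qp d ^ j * uProd g) * m (Qp d ^ (k-b-j) * uProd g)) := by
  rw [distPoly_expand, tensorApply_sum]
  refine Finset.sum_congr rfl fun b _ => ?_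
  rw [tensorApply_sum]
  refine Finset.sum_congr rfl fun j _ => ?_
  rw [tensorApply_sum]
  refine Finset.sum_congr rfl fun g _ => ?_
  rw [tensorApply_smul, tensorApply_rename_mul]

lemma deg_le (j b : ℕ) (g : Fin b → Fin d) :
    (Qp d ^ j * uProd g).totalDegree ≤ 2*j + b := by
  refine le_trans (totalDegree_mul _ _) (add_le_add ?_ ?_)
  · refine le_trans (totalDegree_pow _ _) ?_
    rw [mul_comm]
    apply Nat.mul_le_mul_right
    refine le_trans (totalDegree_finset_sum _ _) ?_
    apply Finset.sup_le
    intro i _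
    simp [totalDegree_X_pow]
  · refine le_trans (totalDegree_finset_prod _ _) ?_
    simp [totalDegree_X]

lemma prod_monomial_one {ι : Type*} (s : Finset ι) (f : ι → (Fin d →₀ ℕ)) :
    ∏ i ∈ s, (monomial (f i) (1:ℝ) : MvPolynomial (Fin d) ℝ)
      = monomial (∑ i ∈ s, f i) 1 := by
  classical
  induction s using Finset.induction with
  | empty => simp
  | insert _ _ h ih => rw [Finset.prod_insert h, ih, Finset.sum_insert h, monomial_mul, one_mul]

lemma exists_rep : ∀ (k : ℕ) (v : Fin d →₀ ℕ), (∑ i, v i) = k →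
    ∃ g : Fin k → Fin d, ∑ t, Finsupp.single (g t) (1:ℕ) = v := by
  intro k
  induction k with
  | zero =>
    intro v hv
    refine ⟨fun t => t.elim0, ?_⟩
    rw [Finset.sum_eq_zero_iff] at hv
    ext j
    simp [hv j (Finset.mem_univ j)]
  | succ k ih =>
    intro v hv
    have hex : ∃ i, 0 < v i := by
      by_contra h
      push_neg at h
      have : ∑ i, v i = 0 := Finset.sum_eq_zero fun i _ => Nat.le_zero.mp (h i)
      omega
    obtain ⟨i, hi⟩ := hex
    set v' : Fin d →₀ ℕ := v - Finsupp.single i 1 with hv'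
    have hsum : Finsupp.single i 1 + v' = v := by
      ext j
      simp only [hv', Finsupp.add_apply, Finsupp.tsub_apply, Finsupp.single_apply]
      by_cases h : i = j
      · subst h; simp; omega
      · simp [h]
    have hv's : ∑ t, v' t = k := by
      have h1 := congrArg (fun w : Fin d →₀ ℕ => ∑ t, w t) hsum
      simp only [Finsupp.add_apply, Finset.sum_add_distrib] at h1
      have h2 : ∑ t, (Finsupp.single i (1:ℕ)) t = 1 := by
        simp [Finsupp.single_apply]
      rw [hv] at h1
      omega
    obtain ⟨g', hg'⟩ := ih v' hv's
    refine ⟨Fin.cons i g', ?_⟩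
    rw [Fin.sum_univ_succ]
    simp only [Fin.cons_zero, Fin.cons_succ]
    rw [hg', hsum]

lemma exists_uProd_ne_zero {l : Module.Dual ℝ (MvPolynomial (Fin d) ℝ)} {k : ℕ}
    (hlt : VanishesLT l k) (hle : ¬ VanishesLE l k) :
    ∃ g : Fin k → Fin d, l (uProd g) ≠ 0 := by
  rw [VanishesLE] at hle
  push_neg at hle
  obtain ⟨p, hdeg, hlp⟩ := hle
  have hp : l p = ∑ v ∈ p.support, (coeff v p) * l (monomial v 1) := by
    conv_lhs => rw [p.as_sum]
    rw [map_sum]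
    refine Finset.sum_congr rfl fun v _ => ?_
    rw [show (monomial v (coeff v p) : MvPolynomial (Fin d) ℝ)
        = (coeff v p) • monomial v 1 by simp [smul_monomial], map_smul, smul_eq_mul]
  have hex : ∃ v ∈ p.support, l (monomial v 1) ≠ 0 := by
    by_contra h
    push_neg at h
    apply hlp
    rw [hp]
    exact Finset.sum_eq_zero fun v hv => by rw [h v hv, mul_zero]
  obtain ⟨v, hvs, hvl⟩ := hex
  have hdv : (v.sum fun _ e => e) ≤ k := le_trans (le_totalDegree hvs) hdeg
  have hdv2 : (v.sum fun _ e => e) = k := by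
    rcases lt_or_eq_of_le hdv with h | h
    · exact absurd (hlt _ (by rw [totalDegree_monomial v (one_ne_zero (α := ℝ))]; exact h)) hvl
    · exact h
  have hsum : ∑ i, v i = k := by
    rw [← hdv2, Finsupp.sum_fintype]
    intro; rfl
  obtain ⟨g, hg⟩ := exists_rep k v hsum
  refine ⟨g, ?_⟩
  have : uProd g = monomial v 1 := by
    rw [uProd]
    have hX : ∀ t : Fin k, (X (g t) : MvPolynomial (Fin d) ℝ)
        = monomial (Finsupp.single (g t) 1) 1 := fun t => rfl
    simp_rw [hX]
    rw [prod_monomial_one, hg]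
  rwa [this]
lemma neg_one_pow_mul_neg_two_pow {k b j : ℕ} (h : 2*j + b = k) :
    (-1:ℝ)^k * (-2)^b = 2^b := by
  rw [show ((-2:ℝ)) = (-1) * 2 by ring, mul_pow, ← mul_assoc, ← pow_add,
    Even.neg_one_pow ⟨j+b, by omega⟩, one_mul]

/-- On any subspace `V` of the dual of `Π` all of whose nonzero elements vanish on `Π_{<k}`
but not on `Π_{≤k}`, the bilinear form `⟨λ,μ⟩ₖ := (−1)^k (λ⊗μ)‖x−y‖^(2k)` is an inner
product: it is symmetric and positive definite on `V`. -/
theorem inner_product_on_complement (d k : ℕ)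
    (V : Submodule ℝ (Module.Dual ℝ (MvPolynomial (Fin d) ℝ)))
    (hV : ∀ l ∈ V, l ≠ 0 → VanishesLT l k ∧ ¬ VanishesLE l k) :
    (∀ l ∈ V, ∀ m ∈ V,
        (-1 : ℝ) ^ k * tensorApply l m (distPoly d k) =
          (-1 : ℝ) ^ k * tensorApply m l (distPoly d k)) ∧
      (∀ l ∈ V, l ≠ 0 → 0 < (-1 : ℝ) ^ k * tensorApply l l (distPoly d k)) := by
  have hLT : ∀ l ∈ V, VanishesLT l k := by
    intro l hl
    by_cases h : l = 0
    · subst h; intro p _; simp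
    · exact (hV l hl h).1
  constructor
  · intro l hl m hm
    congr 1
    rw [tensorApply_distPoly, tensorApply_distPoly]
    refine Finset.sum_congr rfl fun b hb => ?_
    refine Finset.sum_congr rfl fun j hj => ?_
    refine Finset.sum_congr rfl fun g _ => ?_
    rw [Finset.mem_range] at hb hj
    by_cases h1 : 2*j + b < k
    · have hz1 : l (Qp d ^ j * uProd g) = 0 :=
        hLT l hl _ (lt_of_le_of_lt (deg_le j b g) h1)
      have hz2 : m (Qp d ^ j * uProd g) = 0 :=
        hLT m hm _ (lt_of_le_of_lt (deg_le j b g) h1)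
      rw [hz1, hz2]; ring
    · by_cases h2 : 2*(k-b-j) + b < k
      · have hz1 : l (Qp d ^ (k-b-j) * uProd g) = 0 :=
          hLT l hl _ (lt_of_le_of_lt (deg_le (k-b-j) b g) h2)
        have hz2 : m (Qp d ^ (k-b-j) * uProd g) = 0 :=
          hLT m hm _ (lt_of_le_of_lt (deg_le (k-b-j) b g) h2)
        rw [hz1, hz2]; ring
      · have hjj : k - b - j = j := by omega
        rw [hjj]; ring
  · intro l hl hne
    obtain ⟨hlt, hle⟩ := hV l hl hne
    obtain ⟨g₀, hg₀⟩ := exists_uProd_ne_zero hlt hle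
    rw [tensorApply_distPoly, Finset.mul_sum]
    apply Finset.sum_pos'
    · intro b hb
      rw [Finset.mul_sum]
      apply Finset.sum_nonneg
      intro j hj
      rw [Finset.mul_sum]
      apply Finset.sum_nonneg
      intro g _
      rw [Finset.mem_range] at hb hj
      by_cases h1 : 2*j + b < k
      · have hz1 : l (Qp d ^ j * uProd g) = 0 :=
          hLT l hl _ (lt_of_le_of_lt (deg_le j b g) h1)
        rw [hz1]; ring_nf; exact le_refl 0
      · by_cases h2 : 2*(k-b-j) + b < k
        · have hz1 : l (Qp d ^ (k-b-j) * uProd g) = 0 :=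
            hLT l hl _ (lt_of_le_of_lt (deg_le (k-b-j) b g) h2)
          rw [hz1]; ring_nf; exact le_refl 0
        · have hjj : k - b - j = j := by omega
          have hk : 2*j + b = k := by omega
          rw [hjj]
          have heq : (-1:ℝ)^k * ((-2:ℝ)^b * (k.choose b) * ((k-b).choose j) *
              (l (Qp d ^ j * uProd g) * l (Qp d ^ j * uProd g)))
              = (2:ℝ)^b * (k.choose b) * ((k-b).choose j) * (l (Qp d ^ j * uProd g))^2 := by
            rw [← neg_one_pow_mul_neg_two_pow hk]; ring
          rw [heq]
          positivity
    · refine ⟨k, Finset.self_mem_range_succ k, ?_⟩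
      simp only [Nat.sub_self, zero_add, Nat.sub_zero, Finset.range_one, Finset.sum_singleton,
        Nat.choose_self, Nat.choose_zero_right, pow_zero, one_mul, Nat.cast_one, mul_one,
        Nat.zero_sub]
      rw [Finset.mul_sum]
      apply Finset.sum_pos'
      · intro g _
        have heq : (-1:ℝ)^k * ((-2:ℝ)^k * (l (uProd g) * l (uProd g)))
            = (2:ℝ)^k * (l (uProd g))^2 := by
          rw [← neg_one_pow_mul_neg_two_pow (k := k) (b := k) (j := 0) (by omega)]; ring
        rw [heq]; positivity
      · refine ⟨g₀, Finset.mem_univ g₀, ?_⟩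
        have heq : (-1:ℝ)^k * ((-2:ℝ)^k * (l (uProd g₀) * l (uProd g₀)))
            = (2:ℝ)^k * (l (uProd g₀))^2 := by
          rw [← neg_one_pow_mul_neg_two_pow (k := k) (b := k) (j := 0) (by omega)]; ring
        rw [heq]
        have h2 : (0:ℝ) < (l (uProd g₀))^2 := by positivity
        positivity
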